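/- Let B be a complete Boolean algebra and X : Bᵒᵖ → Set a presheaf on B. Then X is a sheaf — i.e., for every b ∈ B and every family (b_i)_{i ∈ I} with ⨆_{i} b_i = b, the restriction map X(b) → ∏_i X(b_i) is injective and its image is exactly the set of families (x_i) such that for all i, j the restrictions of x_i and x_j to X(b_i ⊓ b_j) agree — if and only if for every b ∈ B and every decomposition (b_i)_{i ∈ I} of b, the restriction map X(b) → ∏_i X(b_i) is bijective. -/

import Mathlib

open CategoryTheory Opposite

universe u

namespace Paper

variable {B : Type u} [CompleteBooleanAlgebra B]

/-- The restriction map of a presheaf on a complete Boolean algebra along `b' ≤ b`. -/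
def res (X : Bᵒᵖ ⥤ Type u) {b b' : B} (h : b' ≤ b) : X.obj (op b) → X.obj (op b') :=
  X.map (homOfLE h).op

lemma res_res (X : Bᵒᵖ ⥤ Type u) {a b c : B} (h1 : a ≤ b) (h2 : b ≤ c)
    (x : X.obj (op c)) : res X h1 (res X h2 x) = res X (h1.trans h2) x := by
  simp only [res, ← FunctorToTypes.map_comp_apply]
  rfl

/-- A presheaf on a complete Boolean algebra `B` is a sheaf (for every cover
`b = ⨆ i, b i` the restriction map to the product is injective with image exactly the
compatible families) if and only if for every *decomposition* of every `b ∈ B` (a cover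
by pairwise disjoint elements) the restriction map to the product is bijective. -/
theorem statement14 (X : Bᵒᵖ ⥤ Type u) :
    (∀ (ι : Type u) (b : B) (c : ι → B) (hc : (⨆ i, c i) = b),
        Function.Injective
          (fun (x : X.obj (op b)) (i : ι) => res X ((le_iSup c i).trans hc.le) x) ∧
        ∀ (x : ∀ i, X.obj (op (c i))),
          (∀ i j, res X (inf_le_left : c i ⊓ c j ≤ c i) (x i) =
              res X (inf_le_right : c i ⊓ c j ≤ c j) (x j)) →
          ∃ y : X.obj (op b), ∀ i, res X ((le_iSup c i).trans hc.le) y = x i)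
    ↔
    (∀ (ι : Type u) (b : B) (c : ι → B) (hc : (⨆ i, c i) = b),
        (∀ i j, i ≠ j → c i ⊓ c j = ⊥) →
        Function.Bijective
          (fun (x : X.obj (op b)) (i : ι) => res X ((le_iSup c i).trans hc.le) x)) := by
  constructor
  · intro H ι b c hc hdisj
    -- `X(⊥)` is a subsingleton, from the empty cover
    have hbot : Subsingleton (X.obj (op (⊥ : B))) := by
      have hinj := (H PEmpty ⊥ (fun x => x.elim) (by simp)).1
      refine ⟨fun a b => hinj ?_⟩
      funext i; exact i.elim
    refine ⟨(H ι b c hc).1, fun x => ?_⟩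
    have := (H ι b c hc).2 (fun i => x i) (fun i j => by
      by_cases hij : i = j
      · subst hij; rfl
      · have : Subsingleton (X.obj (op (c i ⊓ c j))) := by
          rw [hdisj i j hij]; exact hbot
        exact Subsingleton.elim _ _)
    obtain ⟨y, hy⟩ := this
    exact ⟨y, funext hy⟩
  · intro H ι b c hc
    -- disjointify the cover using a well-ordering of `ι`
    let r : ι → ι → Prop := WellOrderingRel
    have : IsWellOrder ι r := WellOrderingRel.isWellOrder
    let u : ι → B := fun i => ⨆ j, ⨆ _ : r j i, c j
    let d : ι → B := fun i => c i \ u i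
    have hd_le : ∀ i, d i ≤ c i := fun i => sdiff_le
    have hd_le_b : ∀ i, d i ≤ b := fun i => (hd_le i).trans ((le_iSup c i).trans hc.le)
    have hc_le : ∀ i, c i ≤ ⨆ j, d j := by
      intro i
      induction i using IsWellFounded.induction r with
      | ind i IH =>
        have h1 : c i ≤ d i ⊔ u i := le_sdiff_sup
        have h2 : u i ≤ ⨆ j, d j := by
          refine iSup_le fun j => iSup_le fun hj => ?_
          exact IH j hj
        exact h1.trans (sup_le (le_iSup d i) h2)
    have hd_sup : (⨆ i, d i) = b := by
      apply le_antisymm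
      · exact iSup_le fun i => hd_le_b i
      · rw [← hc]; exact iSup_le hc_le
    have hd_disj : ∀ i j, i ≠ j → d i ⊓ d j = ⊥ := by
      have key : ∀ i j, r j i → d i ⊓ d j = ⊥ := by
        intro i j hji
        have h1 : d i ≤ (u i)ᶜ := by
          show c i \ u i ≤ (u i)ᶜ
          rw [sdiff_eq]; exact inf_le_right
        have h2 : d j ≤ u i :=
          (hd_le j).trans (le_iSup_of_le j (le_iSup (fun _ : r j i => c j) hji))
        apply le_bot_iff.mp
        calc d i ⊓ d j ≤ (u i)ᶜ ⊓ u i := inf_le_inf h1 h2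
          _ = ⊥ := by rw [inf_comm, inf_compl_eq_bot]
      intro i j hij
      rcases (trichotomous_of r i j) with h | h | h
      · rw [inf_comm]; exact key j i h
      · exact absurd h hij
      · exact key i j h
    have Hd := H ι b d hd_sup hd_disj
    constructor
    · intro a a' haa'
      apply Hd.1
      funext i
      have h1 := congrFun haa' i
      simp only at h1 ⊢
      calc res X ((le_iSup d i).trans hd_sup.le) a
          = res X (hd_le i) (res X ((le_iSup c i).trans hc.le) a) := (res_res X _ _ _).symm
        _ = res X (hd_le i) (res X ((le_iSup c i).trans hc.le) a') := by rw [h1]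
        _ = res X ((le_iSup d i).trans hd_sup.le) a' := res_res X _ _ _
    · intro x hcompat
      obtain ⟨y, hy⟩ := Hd.2 (fun i => res X (hd_le i) (x i))
      have hy' : ∀ i, res X ((le_iSup d i).trans hd_sup.le) y = res X (hd_le i) (x i) :=
        fun i => congrFun hy i
      refine ⟨y, fun i => ?_⟩
      -- decompose `c i` as `⨆ j, c i ⊓ d j`
      set e : ι → B := fun j => c i ⊓ d j with he_def
      have he : (⨆ j, e j) = c i := by
        rw [← inf_iSup_eq, hd_sup, inf_eq_left]
        exact (le_iSup c i).trans hc.le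
      have he_disj : ∀ j k, j ≠ k → e j ⊓ e k = ⊥ := by
        intro j k hjk
        apply le_bot_iff.mp
        calc e j ⊓ e k ≤ d j ⊓ d k := inf_le_inf inf_le_right inf_le_right
          _ = ⊥ := hd_disj j k hjk
      apply (H ι (c i) e he he_disj).1
      funext j
      have hej_ci : e j ≤ c i := inf_le_left
      have hej_dj : e j ≤ d j := inf_le_right
      have hej_cj : e j ≤ c j := hej_dj.trans (hd_le j)
      have hej_cij : e j ≤ c i ⊓ c j := le_inf hej_ci hej_cj
      simp only
      calc res X ((le_iSup e j).trans he.le) (res X ((le_iSup c i).trans hc.le) y)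
          = res X (hej_cj.trans ((le_iSup c j).trans hc.le)) y := res_res X _ _ _
        _ = res X hej_dj (res X ((le_iSup d j).trans hd_sup.le) y) := (res_res X _ _ _).symm
        _ = res X hej_dj (res X (hd_le j) (x j)) := by rw [hy' j]
        _ = res X hej_cj (x j) := res_res X _ _ _
        _ = res X hej_cij (res X (inf_le_right : c i ⊓ c j ≤ c j) (x j)) :=
            (res_res X _ _ _).symm
        _ = res X hej_cij (res X (inf_le_left : c i ⊓ c j ≤ c i) (x i)) := by
            rw [hcompat i j]
        _ = res X hej_ci (x i) := res_res X _ _ _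
        _ = res X ((le_iSup e j).trans he.le) (x i) := rfl

end Paper
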